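/- If ρ and ρ' are equivalent stack configurations on G (ρ ≡ ρ', with equivalence taken with respect to the given periodic stacks), then their flips are equivalent with respect to the flipped stacks: Φ(ρ) ≡ Φ(ρ'). -/

import Mathlib

open Function

section BiStackSetup

variable {V E : Type} [Fintype V] [DecidableEq V] [Fintype E]

/-- The directed multigraph with arc set `E`, source map `src` and head map `head`
is strongly connected. -/
def StronglyConnected (src head : E → V) : Prop :=
  ∀ v w : V, Relation.ReflTransGen (fun a b => ∃ e : E, src e = a ∧ head e = b) v w

/-- The outdegree of a vertex `v`. -/
def outdeg (src : E → V) (v : V) : ℕ :=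
  (Finset.univ.filter fun e : E => src e = v).card

/-- `g : ℤ → E` is a bi-infinite rotor stack at `v`: every entry is an arc emanating
from `v`, the sequence is periodic with period `d`, and each fundamental period lists
every arc emanating from `v` exactly once.  Index `0` is the retrospective state (the
rotor) and indices `≥ 1` are the future instructions. -/
def IsBiRotorStack (src : E → V) (d : ℕ) (v : V) (g : ℤ → E) : Prop :=
  (∀ i : ℤ, src (g i) = v) ∧ (∀ i : ℤ, g (i + (d : ℤ)) = g i) ∧
    (∀ e : E, src e = v → ∃ i : ℤ, 1 ≤ i ∧ i ≤ (d : ℤ) ∧ g i = e) ∧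
    (∀ i j : ℤ, 1 ≤ i → i ≤ (d : ℤ) → 1 ≤ j → j ≤ (d : ℤ) → g i = g j → i = j)

end BiStackSetup

/-- A stack configuration: each non-target vertex carries a pointed bi-infinite stack
of arcs; index `0` is the retrospective state and indices `≥ 1` the future. -/
abbrev SConf (E : Type) {V : Type} (T : Finset V) : Type := {v : V // v ∉ T} → ℤ → E

section StackOps

variable {V E : Type} [Fintype V] [DecidableEq V] [Fintype E]

/-- Flip every stack, exchanging past and future:
`[…, e₋₁, e₀ | e₁, e₂, …]` becomes `[…, e₂, e₁ | e₀, e₋₁, …]`. -/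
def flipC {T : Finset V} (β : SConf E T) : SConf E T := fun v i => β v (1 - i)

/-- One step of a particle: at a non-target vertex, shift the pointer one place to
the right and move the particle along the newly passed arc (the new retrospective
state); target vertices absorb. -/
def stepP (head : E → V) (T : Finset V) (p : V × SConf E T) : V × SConf E T :=
  if h : p.1 ∈ T then p
  else (head (p.2 ⟨p.1, h⟩ 1),
    Function.update p.2 ⟨p.1, h⟩ fun i => p.2 ⟨p.1, h⟩ (i + 1))

/-- One step of an antiparticle: at a non-target vertex, move the antiparticle along
the retrospective arc and then shift the pointer one place to the left; target
vertices absorb. -/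
def stepM (head : E → V) (T : Finset V) (p : V × SConf E T) : V × SConf E T :=
  if h : p.1 ∈ T then p
  else (head (p.2 ⟨p.1, h⟩ 0),
    Function.update p.2 ⟨p.1, h⟩ fun i => p.2 ⟨p.1, h⟩ (i - 1))

open Classical in
/-- Route a particle from `x` until it first reaches the target set. -/
noncomputable def routeP (head : E → V) (T : Finset V) (x : V) (β : SConf E T) :
    V × SConf E T :=
  if h : ∃ n, ((stepP head T)^[n] (x, β)).1 ∈ T then
    (stepP head T)^[Nat.find h] (x, β)
  else (x, β)

open Classical in
/-- Route an antiparticle from `x` until it first reaches the target set. -/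
noncomputable def routeM (head : E → V) (T : Finset V) (x : V) (β : SConf E T) :
    V × SConf E T :=
  if h : ∃ n, ((stepM head T)^[n] (x, β)).1 ∈ T then
    (stepM head T)^[Nat.find h] (x, β)
  else (x, β)

/-- The particle addition operator `E_v⁺`. -/
noncomputable def EP (head : E → V) (T : Finset V) (v : {v : V // v ∉ T})
    (β : SConf E T) : SConf E T := (routeP head T v.1 β).2

/-- The antiparticle addition operator `E_v⁻`. -/
noncomputable def EM (head : E → V) (T : Finset V) (v : {v : V // v ∉ T})
    (β : SConf E T) : SConf E T := (routeM head T v.1 β).2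

/-- `t_v⁺(β)`: the target hit by a particle started at `v`. -/
noncomputable def tP (head : E → V) (T : Finset V) (v : {v : V // v ∉ T})
    (β : SConf E T) : V := (routeP head T v.1 β).1

/-- `t_v⁻(β)`: the target hit by an antiparticle started at `v`. -/
noncomputable def tM (head : E → V) (T : Finset V) (v : {v : V // v ∉ T})
    (β : SConf E T) : V := (routeM head T v.1 β).1

/-- The action `σβ`: place `σ v` particles at each non-target vertex `v` and route
them all to the target set. -/
noncomputable def actS (head : E → V) (T : Finset V) (σ : {v : V // v ∉ T} → ℕ)
    (β : SConf E T) : SConf E T :=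
  (Finset.univ : Finset {v : V // v ∉ T}).toList.foldr
    (fun v r => (EP head T v)^[σ v] r) β

/-- Equivalence of stack configurations: `β ≡ β'` iff `σβ = σβ'` for some particle
configuration `σ`. -/
def SEquiv (head : E → V) (T : Finset V) (β β' : SConf E T) : Prop :=
  ∃ σ : {v : V // v ∉ T} → ℕ, actS head T σ β = actS head T σ β'

/-- `A` is (the vertex set of) a cycle of the rotor configuration of `β`: it is the
range of an injective cyclic enumeration `v_0, …, v_{r-1}` such that the
retrospective arc at `v_j` leads to `v_{j+1}` (cyclically). -/
def IsCycleSet (head : E → V) (T : Finset V) (β : SConf E T)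
    (A : Set {v : V // v ∉ T}) : Prop :=
  ∃ r : ℕ, 0 < r ∧ ∃ f : ZMod r → {v : V // v ∉ T}, Function.Injective f ∧
    Set.range f = A ∧ ∀ j : ZMod r, head (β (f j) 0) = (f (j + 1)).1

open Classical in
/-- Push the cycle with vertex set `A`: shift the pointer one place to the left at
each vertex of `A`, leaving the other stacks unchanged. -/
noncomputable def pushCycle {T : Finset V} (β : SConf E T)
    (A : Set {v : V // v ∉ T}) : SConf E T :=
  fun v => if v ∈ A then (fun i => β v (i - 1)) else β v

end StackOps

set_option linter.unusedSectionVars false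
namespace FlipAux

open Finset

variable {V E : Type} [Fintype V] [DecidableEq V] [Fintype E]
variable (src head : E → V) (T : Finset V)

abbrev Vo (T : Finset V) := {v : V // v ∉ T}

/-- shift each stack -/
def Shift (a : Vo T → ℤ) (γ : SConf E T) : SConf E T := fun v i => γ v (i + a v)

lemma Shift_zero (γ : SConf E T) : Shift T (fun _ => 0) γ = γ := by
  funext v i; simp [Shift]

lemma Shift_Shift (a b : Vo T → ℤ) (γ : SConf E T) :
    Shift T a (Shift T b γ) = Shift T (fun v => a v + b v) γ := by
  funext v i; show γ v (i + a v + b v) = γ v (i + (a v + b v)); ring_nf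

/-- weakened rotor-stack property -/
def GoodStack (d : ℕ) (v : V) (g : ℤ → E) : Prop :=
  (∀ i : ℤ, src (g i) = v) ∧ (∀ i : ℤ, g (i + (d : ℤ)) = g i) ∧
    (∀ e : E, src e = v → ∃ i : ℤ, 1 ≤ i ∧ i ≤ (d : ℤ) ∧ g i = e)

def GoodConf (γ : SConf E T) : Prop :=
  ∀ v : Vo T, GoodStack src (outdeg src v.1) v.1 (γ v)

lemma GoodStack.d_pos {d v g} (h : GoodStack src d v g) : 1 ≤ d := by
  obtain ⟨h1, _, h3⟩ := h
  obtain ⟨i, hi1, hi2, _⟩ := h3 (g 0) (h1 0)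
  omega

lemma GoodStack.per_int {d v g} (h : GoodStack src d v g) :
    ∀ (q : ℤ) (i : ℤ), g (i + q * d) = g i := by
  intro q
  induction q using Int.induction_on with
  | zero => simp
  | succ k ih =>
      intro i
      have h2 : i + ((k:ℤ) + 1) * d = (i + k * d) + d := by ring
      rw [h2, h.2.1, ih]
  | pred k ih =>
      intro i
      have := h.2.1 (i + (-(k:ℤ) - 1) * d)
      have h2 : i + (-(k:ℤ) - 1) * d + d = i + (-(k:ℤ)) * d := by ring
      rw [h2] at this; rw [← this, ih]

lemma GoodStack.shift {d v g} (h : GoodStack src d v g) (t : ℤ) :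
    GoodStack src d v (fun i => g (i + t)) := by
  have hd : (1:ℤ) ≤ d := by exact_mod_cast h.d_pos src
  refine ⟨fun i => h.1 _, fun i => ?_, fun e he => ?_⟩
  · show g (i + d + t) = g (i + t)
    have := h.2.1 (i + t); rw [← this]; ring_nf
  · obtain ⟨i₀, hi1, hi2, hie⟩ := h.2.2 e he
    refine ⟨(i₀ - t - 1) % d + 1, ?_, ?_, ?_⟩
    · have := Int.emod_nonneg (i₀ - t - 1) (by omega : (d:ℤ) ≠ 0); omega
    · have := Int.emod_lt_of_pos (i₀ - t - 1) (by omega : (0:ℤ) < d); omega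
    · show g ((i₀ - t - 1) % d + 1 + t) = e
      obtain ⟨q, hq⟩ : ∃ q : ℤ, (i₀ - t - 1) % d = i₀ - t - 1 - q * d :=
        ⟨(i₀ - t - 1) / d, by rw [Int.emod_def]; ring⟩
      rw [hq]
      have : i₀ - t - 1 - q * d + 1 + t = i₀ + (-q) * d := by ring
      rw [this, h.per_int src, hie]

lemma GoodStack.flip {d v g} (h : GoodStack src d v g) :
    GoodStack src d v (fun i => g (1 - i)) := by
  refine ⟨fun i => h.1 _, fun i => ?_, fun e he => ?_⟩
  · show g (1 - (i + d)) = g (1 - i)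
    have := h.2.1 (1 - i - d)
    have h2 : 1 - i - (d:ℤ) + d = 1 - i := by ring
    rw [h2] at this
    have h3 : 1 - (i + (d:ℤ)) = 1 - i - d := by ring
    rw [h3, ← this]
  · obtain ⟨i₀, hi1, hi2, hie⟩ := h.2.2 e he
    refine ⟨1 - i₀ + d, by omega, by omega, ?_⟩
    show g (1 - (1 - i₀ + d)) = e
    have : 1 - (1 - i₀ + d) = i₀ + (-1) * d := by ring
    rw [this, h.per_int src, hie]

lemma GoodConf.shift {γ : SConf E T} (h : GoodConf src T γ) (a : Vo T → ℤ) :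
    GoodConf src T (Shift T a γ) := fun v => (h v).shift src (a v)

lemma GoodConf.flip {γ : SConf E T} (h : GoodConf src T γ) :
    GoodConf src T (flipC γ) := fun v => (h v).flip src

/-- number of arcs in the stack windows `(a y, b y]` whose head is `v` -/
noncomputable def Win (γ : SConf E T) (a b : Vo T → ℤ) (v : Vo T) : ℕ :=
  ∑ y : Vo T, ((Finset.Ioc (a y) (b y)).filter fun j => head (γ y j) = ↑v).card

lemma Win_mono (γ : SConf E T) (a : Vo T → ℤ) {b b' : Vo T → ℤ}
    (h : ∀ y, b y ≤ b' y) (v : Vo T) :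
    Win head T γ a b v ≤ Win head T γ a b' v :=
  Finset.sum_le_sum fun y _ => Finset.card_le_card
    (Finset.filter_subset_filter _ (Finset.Ioc_subset_Ioc_right (h y)))

lemma card_filter_Ioc_add (p q r : ℤ) (hpq : p ≤ q) (hqr : q ≤ r)
    (P : ℤ → Prop) [DecidablePred P] :
    ((Finset.Ioc p q).filter P).card + ((Finset.Ioc q r).filter P).card
      = ((Finset.Ioc p r).filter P).card := by
  rw [← Finset.card_union_of_disjoint, ← Finset.filter_union,
    Finset.Ioc_union_Ioc_eq_Ioc hpq hqr]
  refine Finset.disjoint_filter_filter ?_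
  rw [Finset.disjoint_left]
  intro j hj hj'
  simp only [Finset.mem_Ioc] at hj hj'
  omega

lemma Win_add (γ : SConf E T) (a b c : Vo T → ℤ) (hab : ∀ y, a y ≤ b y)
    (hbc : ∀ y, b y ≤ c y) (v : Vo T) :
    Win head T γ a b v + Win head T γ b c v = Win head T γ a c v := by
  rw [Win, Win, Win, ← Finset.sum_add_distrib]
  exact Finset.sum_congr rfl fun y _ => card_filter_Ioc_add _ _ _ (hab y) (hbc y) _

lemma card_filter_Ioc_shift (p q t : ℤ) (P : ℤ → Prop) [DecidablePred P] :
    ((Finset.Ioc p q).filter fun j => P (j + t)).card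
      = ((Finset.Ioc (p + t) (q + t)).filter fun j => P j).card := by
  apply Finset.card_bij (fun j _ => j + t)
  · intro a ha
    simp only [Finset.mem_filter, Finset.mem_Ioc] at ha ⊢
    exact ⟨⟨by omega, by omega⟩, ha.2⟩
  · intro a _ b _ hab; omega
  · intro b hb
    simp only [Finset.mem_filter, Finset.mem_Ioc] at hb
    refine ⟨b - t, ?_, by ring⟩
    simp only [Finset.mem_filter, Finset.mem_Ioc]
    have h2 : b - t + t = b := by ring
    rw [h2]
    exact ⟨⟨by omega, by omega⟩, hb.2⟩

lemma Win_shift (γ : SConf E T) (t a b : Vo T → ℤ) (v : Vo T) :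
    Win head T (Shift T t γ) a b v
      = Win head T γ (fun y => a y + t y) (fun y => b y + t y) v := by
  rw [Win, Win]
  refine Finset.sum_congr rfl fun y _ => ?_
  have := card_filter_Ioc_shift (a y) (b y) (t y) (fun i => head (γ y i) = ↑v)
  exact this

/-- the signed circulation window count -/
noncomputable def Circ (γ : SConf E T) (w : Vo T → ℤ) (v : Vo T) : ℤ :=
  ∑ y : Vo T, ((((Finset.Ioc 0 (w y)).filter fun j => head (γ y j) = ↑v).card : ℤ)
    - (((Finset.Ioc (w y) 0).filter fun j => head (γ y j) = ↑v).card : ℤ))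

lemma win_sub (γ : SConf E T) (w b : Vo T → ℤ) (hb : ∀ y, 0 ≤ b y)
    (hw : ∀ y, w y ≤ b y) (v : Vo T) :
    (Win head T γ (fun _ => 0) b v : ℤ) - (Win head T γ w b v : ℤ)
      = Circ head T γ w v := by
  rw [Win, Win, Circ, Nat.cast_sum, Nat.cast_sum, ← Finset.sum_sub_distrib]
  refine Finset.sum_congr rfl fun y _ => ?_
  rcases le_or_gt 0 (w y) with h0 | h0
  · rw [Finset.Ioc_eq_empty (by omega : ¬ (w y) < 0)]
    have := card_filter_Ioc_add 0 (w y) (b y) h0 (hw y)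
      (fun j => head (γ y j) = ↑v)
    simp only [Finset.filter_empty, Finset.card_empty]
    push_cast
    omega
  · rw [Finset.Ioc_eq_empty (by omega : ¬ 0 < (w y))]
    have := card_filter_Ioc_add (w y) 0 (b y) (by omega) (hb y)
      (fun j => head (γ y j) = ↑v)
    simp only [Finset.filter_empty, Finset.card_empty]
    push_cast
    omega

lemma card_filter_Ioc_onesub (p q : ℤ) (P : ℤ → Prop) [DecidablePred P] :
    ((Finset.Ioc p q).filter fun j => P (1 - j)).card
      = ((Finset.Ioc (-q) (-p)).filter P).card := by
  apply Finset.card_bij (fun j _ => 1 - j)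
  · intro a ha
    simp only [Finset.mem_filter, Finset.mem_Ioc] at ha ⊢
    exact ⟨⟨by omega, by omega⟩, ha.2⟩
  · intro a _ b _ hab; omega
  · intro b hb
    simp only [Finset.mem_filter, Finset.mem_Ioc] at hb
    refine ⟨1 - b, ?_, by ring⟩
    simp only [Finset.mem_filter, Finset.mem_Ioc]
    have h2 : 1 - (1 - b) = b := by ring
    rw [h2]
    exact ⟨⟨by omega, by omega⟩, hb.2⟩

lemma circ_flip (γ : SConf E T) (w : Vo T → ℤ) (v : Vo T) :
    Circ head T (flipC γ) (fun y => - w y) v = - Circ head T γ w v := by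
  rw [Circ, Circ, ← Finset.sum_neg_distrib]
  refine Finset.sum_congr rfl fun y _ => ?_
  have e1 : ((Finset.Ioc (0:ℤ) (- w y)).filter fun j => head (flipC γ y j) = ↑v).card
      = ((Finset.Ioc (w y) 0).filter fun j => head (γ y j) = ↑v).card := by
    have := card_filter_Ioc_onesub 0 (-(w y)) (fun i => head (γ y i) = ↑v)
    simp [flipC] at this ⊢; convert this; rfl
  have e2 : ((Finset.Ioc (- w y) (0:ℤ)).filter fun j => head (flipC γ y j) = ↑v).card
      = ((Finset.Ioc 0 (w y)).filter fun j => head (γ y j) = ↑v).card := by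
    have := card_filter_Ioc_onesub (-(w y)) 0 (fun i => head (γ y i) = ↑v)
    simp [flipC] at this ⊢; convert this; rfl
  rw [e1, e2]
  ring

lemma circ_shiftbase (γ : SConf E T) (w : Vo T → ℤ) (v : Vo T) :
    Circ head T (Shift T w γ) (fun y => - w y) v = - Circ head T γ w v := by
  rw [Circ, Circ, ← Finset.sum_neg_distrib]
  refine Finset.sum_congr rfl fun y _ => ?_
  have e1 : ((Finset.Ioc (0:ℤ) (- w y)).filter fun j => head (Shift T w γ y j) = ↑v).card
      = ((Finset.Ioc (w y) 0).filter fun j => head (γ y j) = ↑v).card := by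
    have := card_filter_Ioc_shift 0 (-(w y)) (w y) (fun i => head (γ y i) = ↑v)
    simp [Shift] at this ⊢; convert this; rfl
  have e2 : ((Finset.Ioc (- w y) (0:ℤ)).filter fun j => head (Shift T w γ y j) = ↑v).card
      = ((Finset.Ioc 0 (w y)).filter fun j => head (γ y j) = ↑v).card := by
    have := card_filter_Ioc_shift (-(w y)) 0 (w y) (fun i => head (γ y i) = ↑v)
    simp [Shift] at this ⊢; convert this; rfl
  rw [e1, e2]
  ring

section Walk

variable (γ : SConf E T) (x : V)

def pos (n : ℕ) : V := ((stepP head T)^[n] (x, γ)).1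
def stk (n : ℕ) : SConf E T := ((stepP head T)^[n] (x, γ)).2
def cnt (n : ℕ) (v : Vo T) : ℕ :=
  ∑ m ∈ Finset.range n, if pos head T γ x m = ↑v then 1 else 0

lemma pos_zero : pos head T γ x 0 = x := rfl

lemma cnt_zero (v : Vo T) : cnt head T γ x 0 v = 0 := by simp [cnt]

lemma cnt_succ (n : ℕ) (v : Vo T) :
    cnt head T γ x (n + 1) v
      = cnt head T γ x n v + if pos head T γ x n = ↑v then 1 else 0 :=
  Finset.sum_range_succ _ _

lemma cnt_mono {m n : ℕ} (h : m ≤ n) (v : Vo T) :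
    cnt head T γ x m v ≤ cnt head T γ x n v := by
  unfold cnt
  apply Finset.sum_le_sum_of_subset
  exact Finset.range_subset_range.mpr h

lemma cnt_lt_of_visit {m n : ℕ} (hmn : m < n) {v : Vo T}
    (hv : pos head T γ x m = ↑v) :
    cnt head T γ x m v < cnt head T γ x n v := by
  have h1 : cnt head T γ x (m+1) v = cnt head T γ x m v + 1 := by
    rw [cnt_succ, if_pos hv]
  have h2 := cnt_mono head T γ x (by omega : m + 1 ≤ n) v
  omega

lemma cnt_ivt : ∀ (n : ℕ) {k : ℕ} {v : Vo T}, k < cnt head T γ x n v →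
    ∃ m < n, pos head T γ x m = ↑v ∧ cnt head T γ x m v = k := by
  intro n
  induction n with
  | zero => intro k v hk; rw [cnt_zero] at hk; omega
  | succ n ih =>
      intro k v hk
      rw [cnt_succ] at hk
      rcases lt_or_ge k (cnt head T γ x n v) with h | h
      · obtain ⟨m, hm, h1, h2⟩ := ih h
        exact ⟨m, by omega, h1, h2⟩
      · by_cases hv : pos head T γ x n = ↑v
        · rw [if_pos hv] at hk
          exact ⟨n, by omega, hv, by omega⟩
        · rw [if_neg hv] at hk; omega

/-- stack invariant along the walk -/
lemma stk_spec : ∀ (n : ℕ), (∀ m < n, pos head T γ x m ∉ T) →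
    stk head T γ x n = Shift T (fun v => (cnt head T γ x n v : ℤ)) γ := by
  intro n
  induction n with
  | zero =>
      intro _
      funext v i
      show γ v i = γ v (i + ((0:ℕ):ℤ))
      norm_num
  | succ n ih =>
      intro hg
      have hgn : ∀ m < n, pos head T γ x m ∉ T := fun m hm => hg m (by omega)
      have hn : pos head T γ x n ∉ T := hg n (by omega)
      have hstep : (stepP head T)^[n+1] (x, γ)
          = stepP head T ((stepP head T)^[n] (x, γ)) :=
        Function.iterate_succ_apply' _ _ _
      have hpair : (stepP head T)^[n] (x, γ)
          = (pos head T γ x n, stk head T γ x n) := rfl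
      have hstk : stk head T γ x (n+1)
          = (stepP head T (pos head T γ x n, stk head T γ x n)).2 := by
        rw [stk, hstep, hpair]
      rw [hstk, stepP]
      simp only [dif_neg hn]
      rw [ih hgn]
      funext v i
      rcases eq_or_ne v ⟨pos head T γ x n, hn⟩ with hv | hv
      · subst hv
        rw [Function.update_self]
        show γ _ (i + 1 + (cnt head T γ x n _ : ℤ)) = γ _ (i + (cnt head T γ x (n+1) _ : ℤ))
        rw [cnt_succ, if_pos rfl]
        push_cast
        ring_nf
      · rw [Function.update_of_ne hv]
        show γ v (i + (cnt head T γ x n v : ℤ)) = γ v (i + (cnt head T γ x (n+1) v : ℤ))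
        rw [cnt_succ, if_neg (by
          intro hcontra
          exact hv (Subtype.ext hcontra.symm))]
        norm_num

lemma pos_succ (n : ℕ) (hg : ∀ m < n, pos head T γ x m ∉ T)
    (hn : pos head T γ x n ∉ T) :
    pos head T γ x (n+1)
      = head (γ ⟨pos head T γ x n, hn⟩
          ((cnt head T γ x n ⟨pos head T γ x n, hn⟩ : ℤ) + 1)) := by
  have hstep : (stepP head T)^[n+1] (x, γ)
      = stepP head T ((stepP head T)^[n] (x, γ)) :=
    Function.iterate_succ_apply' _ _ _
  have hpair : (stepP head T)^[n] (x, γ)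
      = (pos head T γ x n, stk head T γ x n) := rfl
  have hp : pos head T γ x (n+1)
      = (stepP head T (pos head T γ x n, stk head T γ x n)).1 := by
    rw [pos, hstep, hpair]
  rw [hp, stepP]
  simp only [dif_neg hn]
  rw [stk_spec head T γ x n hg]
  show head (γ _ (1 + (cnt head T γ x n _ : ℤ))) = _
  congr 1
  ring_nf

end Walk

section Counting

variable (γ : SConf E T) (x : V)

lemma cnt_decomp (n : ℕ) (v : Vo T) :
    cnt head T γ x (n+1) v
      = (if x = ↑v then 1 else 0)
        + ((Finset.Ico 1 (n+1)).filter fun m => pos head T γ x m = ↑v).card := by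
  have hins : Finset.range (n+1) = insert 0 (Finset.Ico 1 (n+1)) := by
    ext m; simp [Finset.mem_range, Finset.mem_Ico]; omega
  rw [cnt, hins, Finset.sum_insert (by simp)]
  rw [Finset.card_filter]
  rfl

/-- the sigma-set of used arc slots heading to `v` -/
noncomputable def Sig (b : Vo T → ℤ) (v : Vo T) : Finset ((y : Vo T) × ℤ) :=
  (Finset.univ : Finset (Vo T)).sigma
    (fun y => (Finset.Ioc 0 (b y)).filter fun j => head (γ y j) = ↑v)

lemma card_Sig (b : Vo T → ℤ) (v : Vo T) :
    (Sig head T γ b v).card = Win head T γ (fun _ => 0) b v := by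
  rw [Sig, Finset.card_sigma]; rfl

/-- The map from entry times to arc slots. -/
noncomputable def slot (v : Vo T) (m : ℕ) : (y : Vo T) × ℤ :=
  if h : pos head T γ x (m-1) ∉ T then
    ⟨⟨pos head T γ x (m-1), h⟩,
      (cnt head T γ x (m-1) ⟨pos head T γ x (m-1), h⟩ : ℤ) + 1⟩
  else ⟨v, 0⟩

lemma slot_mem {n : ℕ} (hg : ∀ m < n, pos head T γ x m ∉ T) (v : Vo T)
    {m : ℕ} (hm : m ∈ (Finset.Ico 1 (n+1)).filter fun m => pos head T γ x m = ↑v) :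
    slot head T γ x v m ∈ Sig head T γ (fun y => (cnt head T γ x n y : ℤ)) v := by
  simp only [Finset.mem_filter, Finset.mem_Ico] at hm
  obtain ⟨⟨h1, h2⟩, h3⟩ := hm
  have hlt : m - 1 < n := by omega
  have hnt : pos head T γ x (m-1) ∉ T := hg (m-1) hlt
  rw [slot, dif_pos hnt]
  have hcl := cnt_lt_of_visit head T γ x hlt
    (v := ⟨pos head T γ x (m-1), hnt⟩) rfl
  have hps := pos_succ head T γ x (m-1) (fun k hk => hg k (by omega)) hnt
  rw [show m - 1 + 1 = m by omega] at hps
  simp only [Sig, Finset.mem_sigma, Finset.mem_univ, Finset.mem_filter,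
    Finset.mem_Ioc, true_and]
  refine ⟨⟨by omega, by omega⟩, ?_⟩
  rw [← hps, h3]

lemma slot_inj {n : ℕ} (hg : ∀ m < n, pos head T γ x m ∉ T) (v : Vo T)
    {m1 m2 : ℕ}
    (hm1 : m1 ∈ (Finset.Ico 1 (n+1)).filter fun m => pos head T γ x m = ↑v)
    (hm2 : m2 ∈ (Finset.Ico 1 (n+1)).filter fun m => pos head T γ x m = ↑v)
    (heq : slot head T γ x v m1 = slot head T γ x v m2) : m1 = m2 := by
  simp only [Finset.mem_filter, Finset.mem_Ico] at hm1 hm2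
  have hnt1 : pos head T γ x (m1-1) ∉ T := hg _ (by omega)
  have hnt2 : pos head T γ x (m2-1) ∉ T := hg _ (by omega)
  rw [slot, dif_pos hnt1, slot, dif_pos hnt2] at heq
  have hfst := congrArg Sigma.fst heq
  simp only at hfst
  by_contra hne
  rcases lt_trichotomy m1 m2 with h | h | h
  · have : cnt head T γ x (m1-1) ⟨pos head T γ x (m1-1), hnt1⟩
        < cnt head T γ x (m2-1) ⟨pos head T γ x (m1-1), hnt1⟩ := by
      apply cnt_lt_of_visit head T γ x (by omega : m1 - 1 < m2 - 1) rfl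
    have hsnd := congrArg (fun p : (y : Vo T) × ℤ => p.2) heq
    simp only at hsnd
    rw [← hfst] at hsnd
    omega
  · exact hne h
  · have : cnt head T γ x (m2-1) ⟨pos head T γ x (m2-1), hnt2⟩
        < cnt head T γ x (m1-1) ⟨pos head T γ x (m2-1), hnt2⟩ := by
      apply cnt_lt_of_visit head T γ x (by omega : m2 - 1 < m1 - 1) rfl
    have hsnd := congrArg (fun p : (y : Vo T) × ℤ => p.2) heq
    simp only at hsnd
    rw [hfst] at hsnd
    omega

lemma entry_le {n : ℕ} (hg : ∀ m < n, pos head T γ x m ∉ T) (v : Vo T) :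
    ((Finset.Ico 1 (n+1)).filter fun m => pos head T γ x m = ↑v).card
      ≤ Win head T γ (fun _ => 0) (fun y => (cnt head T γ x n y : ℤ)) v := by
  rw [← card_Sig]
  apply Finset.card_le_card_of_injOn (slot head T γ x v)
  · intro m hm; exact slot_mem head T γ x hg v hm
  · intro m1 hm1 m2 hm2 heq
    exact slot_inj head T γ x hg v hm1 hm2 heq

lemma entry_eq {N : ℕ} (hg : ∀ m < N, pos head T γ x m ∉ T) (v : Vo T) :
    ((Finset.Ico 1 (N+1)).filter fun m => pos head T γ x m = ↑v).card
      = Win head T γ (fun _ => 0) (fun y => (cnt head T γ x N y : ℤ)) v := by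
  rw [← card_Sig]
  apply Finset.card_bij (fun m _ => slot head T γ x v m)
  · intro m hm; exact slot_mem head T γ x hg v hm
  · intro m1 hm1 m2 hm2 heq
    exact slot_inj head T γ x hg v hm1 hm2 heq
  · rintro ⟨y, j⟩ hb
    simp only [Sig, Finset.mem_sigma, Finset.mem_univ, Finset.mem_filter,
      Finset.mem_Ioc, true_and] at hb
    obtain ⟨⟨hj0, hjc⟩, hhead⟩ := hb
    have hk : ((j - 1).toNat : ℤ) = j - 1 := Int.toNat_of_nonneg (by omega)
    have hklt : (j-1).toNat < cnt head T γ x N y := by omega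
    obtain ⟨m, hmN, hpm, hcm⟩ := cnt_ivt head T γ x N hklt
    have hnt : pos head T γ x m ∉ T := hg m hmN
    have hyeq : (⟨pos head T γ x m, hnt⟩ : Vo T) = y := Subtype.ext hpm
    refine ⟨m + 1, ?_, ?_⟩
    · simp only [Finset.mem_filter, Finset.mem_Ico]
      refine ⟨⟨by omega, by omega⟩, ?_⟩
      have hps := pos_succ head T γ x m (fun k hk => hg k (by omega)) hnt
      rw [hps, hyeq, hcm]
      rw [show ((((j-1).toNat : ℕ)) : ℤ) + 1 = j by omega]
      exact hhead
    · rw [slot]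
      have hm1 : m + 1 - 1 = m := by omega
      rw [hm1, dif_pos hnt]
      rw [hyeq, hcm]
      congr 1
      omega

lemma cnt_conserv {N : ℕ} (hg : ∀ m < N, pos head T γ x m ∉ T)
    (hNT : pos head T γ x N ∈ T) (hN : 1 ≤ N) (v : Vo T) :
    cnt head T γ x N v
      = (if x = ↑v then 1 else 0)
        + Win head T γ (fun _ => 0) (fun y => (cnt head T γ x N y : ℤ)) v := by
  obtain ⟨n, rfl⟩ : ∃ n, N = n + 1 := ⟨N - 1, by omega⟩
  rw [cnt_decomp]
  congr 1
  rw [← entry_eq head T γ x hg v]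
  congr 1
  have hIco : Finset.Ico 1 (n+1+1) = insert (n+1) (Finset.Ico 1 (n+1)) := by
    ext m; simp [Finset.mem_Ico, Finset.mem_insert]
  rw [hIco, Finset.filter_insert, if_neg]
  intro hc
  rw [hc] at hNT
  exact v.2 hNT

end Counting

section Route

lemma route_spec (γ : SConf E T) (xv : Vo T)
    (hterm : ∃ n, ((stepP head T)^[n] ((↑xv : V), γ)).1 ∈ T) :
    ∃ c : Vo T → ℕ,
      EP head T xv γ = Shift T (fun v => (c v : ℤ)) γ ∧
      (∀ v, c v = (if v = xv then 1 else 0)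
        + Win head T γ (fun _ => 0) (fun y => (c y : ℤ)) v) ∧
      (∀ h : Vo T → ℕ,
        (∀ v, ((if v = xv then 1 else 0)
          + Win head T γ (fun _ => 0) (fun y => (h y : ℤ)) v) ≤ h v) →
        ∀ v, c v ≤ h v) := by
  classical
  set x : V := ↑xv with hx
  set N := Nat.find hterm with hN
  have hNT : pos head T γ x N ∈ T := Nat.find_spec hterm
  have hg : ∀ m < N, pos head T γ x m ∉ T := fun m hm => Nat.find_min hterm hm
  have hx0 : pos head T γ x 0 = x := rfl
  have hxT : x ∉ T := xv.2
  have hN1 : 1 ≤ N := by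
    rcases Nat.eq_zero_or_pos N with h0 | h; · rw [h0] at hNT; exact absurd hNT hxT
    · omega
  have hEP : EP head T xv γ = stk head T γ x N := by
    rw [EP, routeP, dif_pos hterm]; rfl
  refine ⟨fun v => cnt head T γ x N v, ?_, ?_, ?_⟩
  · rw [hEP]; exact stk_spec head T γ x N hg
  · intro v
    have := cnt_conserv head T γ x hg hNT hN1 v
    beta_reduce
    rw [this]
    congr 1
    by_cases hvx : v = xv
    · rw [if_pos hvx, if_pos (by rw [hvx])]
    · rw [if_neg hvx, if_neg (by intro hc; exact hvx (Subtype.ext hc.symm))]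
  · intro h hh
    -- prove by induction: ∀ n ≤ N, ∀ v, cnt n v ≤ h v
    suffices hsuf : ∀ n, n ≤ N → ∀ v, cnt head T γ x n v ≤ h v by
      intro v; exact hsuf N le_rfl v
    intro n
    induction n with
    | zero => intro _ v; rw [cnt_zero]; omega
    | succ n ih =>
        intro hn v
        have ihn := ih (by omega)
        rw [cnt_decomp]
        have h1 : ((Finset.Ico 1 (n+1)).filter fun m => pos head T γ x m = ↑v).card
            ≤ Win head T γ (fun _ => 0) (fun y => (cnt head T γ x n y : ℤ)) v :=
          entry_le head T γ x (fun m hm => hg m (by omega)) v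
        have h2 : Win head T γ (fun _ => 0) (fun y => (cnt head T γ x n y : ℤ)) v
            ≤ Win head T γ (fun _ => 0) (fun y => (h y : ℤ)) v :=
          Win_mono head T γ _ (fun y => by exact_mod_cast ihn y) v
        have h3 := hh v
        have h4 : (if x = ↑v then 1 else 0) = (if v = xv then 1 else 0) := by
          by_cases hvx : v = xv
          · rw [if_pos hvx, if_pos (by rw [hvx])]
          · rw [if_neg hvx, if_neg (by intro hc; exact hvx (Subtype.ext hc.symm))]
        omega

end Route

section Foldr

/-- oracle for termination from any natural shift of γ -/
def Oracle (γ : SConf E T) : Prop :=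
  ∀ (a : Vo T → ℕ) (x : Vo T), ∃ n,
    ((stepP head T)^[n] ((↑x : V), Shift T (fun v => (a v : ℤ)) γ)).1 ∈ T

lemma foldr_spec (γ : SConf E T) (horacle : Oracle head T γ) (L : List (Vo T)) :
    ∃ u : Vo T → ℕ,
      List.foldr (fun v r => EP head T v r) γ L
        = Shift T (fun v => (u v : ℤ)) γ ∧
      (∀ v, u v = L.count v + Win head T γ (fun _ => 0) (fun y => (u y : ℤ)) v) ∧
      (∀ h : Vo T → ℕ,
        (∀ v, L.count v + Win head T γ (fun _ => 0) (fun y => (h y : ℤ)) v ≤ h v) →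
        ∀ v, u v ≤ h v) := by
  classical
  induction L with
  | nil =>
      refine ⟨fun _ => 0, ?_, ?_, ?_⟩
      · simp [Shift_zero]
      · intro v
        simp [Win]
      · intro h _ v; exact Nat.zero_le _
  | cons xh L ih =>
      obtain ⟨u, hu1, hu2, hu3⟩ := ih
      -- route one more particle from xh starting at Shift u γ
      obtain ⟨c, hc1, hc2, hc3⟩ := route_spec head T
        (Shift T (fun v => (u v : ℤ)) γ) xh (horacle u xh)
      have hfold : List.foldr (fun v r => EP head T v r) γ (xh :: L)
          = EP head T xh (Shift T (fun v => (u v : ℤ)) γ) := by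
        rw [List.foldr_cons, hu1]
      -- translate windows of the shifted configuration
      have hWs : ∀ (b : Vo T → ℕ) (v : Vo T),
          Win head T (Shift T (fun y => (u y : ℤ)) γ) (fun _ => 0)
            (fun y => (b y : ℤ)) v
          = Win head T γ (fun y => (u y : ℤ)) (fun y => (b y : ℤ) + u y) v := by
        intro b v
        rw [Win_shift]
        congr 1
        funext y
        omega
      refine ⟨fun v => u v + c v, ?_, ?_, ?_⟩
      · rw [hfold, hc1, Shift_Shift]
        funext v i
        show γ v (i + ((c v : ℤ) + (u v : ℤ))) = γ v (i + ((u v + c v : ℕ) : ℤ))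
        congr 1
        push_cast
        ring
      · intro v
        have hc2' := hc2 v
        rw [hWs] at hc2'
        have hWadd : Win head T γ (fun _ => 0) (fun y => (u y : ℤ)) v
            + Win head T γ (fun y => (u y : ℤ)) (fun y => (c y : ℤ) + u y) v
            = Win head T γ (fun _ => 0) (fun y => ((u y + c y : ℕ) : ℤ)) v := by
          rw [Win_add head T γ _ _ _ (fun y => by positivity)
            (fun y => by push_cast; omega)]
          congr 1
          funext y
          push_cast
          ring
        have hu2' := hu2 v
        have hcnt : (xh :: L).count v = L.count v + (if v = xh then 1 else 0) := by
          by_cases hvx : v = xh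
          · subst hvx; simp [List.count_cons]
          · rw [List.count_cons, if_neg (by simp only [beq_iff_eq]; exact fun h => hvx h.symm),
              if_neg hvx]
        beta_reduce
        omega
      · intro h hh
        -- first: u ≤ h
        have huh : ∀ v, u v ≤ h v := by
          apply hu3
          intro v
          have := hh v
          have hcc : L.count v ≤ (xh :: L).count v := by
            rw [List.count_cons]; omega
          omega
        -- second: c ≤ h - u
        have hch : ∀ v, c v ≤ h v - u v := by
          apply hc3
          intro v
          rw [hWs]
          have hWadd : Win head T γ (fun _ => 0) (fun y => (u y : ℤ)) v
              + Win head T γ (fun y => (u y : ℤ)) (fun y => ((h y - u y : ℕ) : ℤ) + u y) v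
              = Win head T γ (fun _ => 0) (fun y => (h y : ℤ)) v := by
            rw [Win_add head T γ _ _ _ (fun y => by positivity)
              (fun y => by push_cast; omega)]
            congr 1
            funext y
            have := huh y
            push_cast [Nat.cast_sub (huh y)]
            ring
          have hu2' := hu2 v
          have hh' := hh v
          have hcnt : (xh :: L).count v = L.count v + (if v = xh then 1 else 0) := by
            by_cases hvx : v = xh
            · subst hvx; simp [List.count_cons]
            · rw [List.count_cons, if_neg (by simp only [beq_iff_eq]; exact fun h => hvx h.symm),
                if_neg hvx]
          have := huh v
          omega
        intro v
        have := huh v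
        have := hch v
        beta_reduce
        omega

/-- expansion of a particle configuration into a list -/
def expandL (σ : Vo T → ℕ) : List (Vo T) → List (Vo T)
  | [] => []
  | v :: l => List.replicate (σ v) v ++ expandL σ l

lemma foldr_replicate (f : Vo T → SConf E T → SConf E T) (n : ℕ) (v : Vo T)
    (γ : SConf E T) :
    List.foldr f γ (List.replicate n v) = (f v)^[n] γ := by
  induction n with
  | zero => rfl
  | succ n ih =>
      rw [List.replicate_succ, List.foldr_cons, ih, Function.iterate_succ_apply']

lemma foldr_expandL (σ : Vo T → ℕ) (γ : SConf E T) :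
    ∀ l : List (Vo T),
      List.foldr (fun v r => EP head T v r) γ (expandL T σ l)
        = List.foldr (fun v r => (EP head T v)^[σ v] r) γ l := by
  intro l
  induction l with
  | nil => rfl
  | cons v l ih =>
      show List.foldr _ γ (List.replicate (σ v) v ++ expandL T σ l) = _
      rw [List.foldr_append, ih, List.foldr_cons, foldr_replicate]

lemma count_expandL (σ : Vo T → ℕ) (v : Vo T) :
    ∀ l : List (Vo T), l.Nodup → v ∈ l → (expandL T σ l).count v = σ v := by
  have hzero : ∀ l : List (Vo T), v ∉ l → (expandL T σ l).count v = 0 := by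
    intro l
    induction l with
    | nil => intro _; rfl
    | cons w l ih =>
        intro hv
        show ((List.replicate (σ w) w) ++ expandL T σ l).count v = 0
        rw [List.count_append, List.count_replicate, if_neg, ih (fun h => hv (List.mem_cons_of_mem _ h))]
        intro hc
        exact hv (by rw [beq_iff_eq.mp hc]; exact List.mem_cons_self)
  intro l
  induction l with
  | nil => intro _ h; exact absurd h List.not_mem_nil
  | cons w l ih =>
      intro hnd hv
      show ((List.replicate (σ w) w) ++ expandL T σ l).count v = σ v
      rw [List.count_append]
      rcases List.mem_cons.mp hv with h | h
      · rw [List.count_replicate, if_pos (by simp [h])]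
        rw [hzero l (by rw [h]; exact (List.nodup_cons.mp hnd).1)]
        rw [h]
        omega
      · rw [ih (List.nodup_cons.mp hnd).2 h]
        rw [List.count_replicate, if_neg, Nat.zero_add]
        intro hc
        have : w = v := beq_iff_eq.mp hc
        exact (List.nodup_cons.mp hnd).1 (this ▸ h)

lemma actS_spec (γ : SConf E T) (horacle : Oracle head T γ) (σ : Vo T → ℕ) :
    ∃ u : Vo T → ℕ,
      actS head T σ γ = Shift T (fun v => (u v : ℤ)) γ ∧
      (∀ v, u v = σ v + Win head T γ (fun _ => 0) (fun y => (u y : ℤ)) v) ∧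
      (∀ h : Vo T → ℕ,
        (∀ v, σ v + Win head T γ (fun _ => 0) (fun y => (h y : ℤ)) v ≤ h v) →
        ∀ v, u v ≤ h v) := by
  classical
  have hact : actS head T σ γ
      = List.foldr (fun v r => EP head T v r) γ
          (expandL T σ (Finset.univ : Finset (Vo T)).toList) := by
    rw [actS, foldr_expandL]
  have hcount : ∀ v : Vo T,
      (expandL T σ (Finset.univ : Finset (Vo T)).toList).count v = σ v := by
    intro v
    exact count_expandL T σ v _ (Finset.nodup_toList _)
      (by rw [Finset.mem_toList]; exact Finset.mem_univ v)
  obtain ⟨u, h1, h2, h3⟩ := foldr_spec head T γ horacle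
    (expandL T σ (Finset.univ : Finset (Vo T)).toList)
  refine ⟨u, by rw [hact, h1], ?_, ?_⟩
  · intro v; rw [← hcount v]; exact h2 v
  · intro h hh
    apply h3
    intro v
    rw [hcount v]
    exact hh v

end Foldr

section Termination

lemma terminates (hconn : StronglyConnected src head) (hT : T.Nonempty)
    (γ : SConf E T) (hγ : GoodConf src T γ) (x : V) :
    ∃ n, ((stepP head T)^[n] (x, γ)).1 ∈ T := by
  classical
  by_contra hno
  push_neg at hno
  have hg : ∀ m, pos head T γ x m ∉ T := fun m => hno m
  -- the set of vertices visited infinitely often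
  set S : Set V := {v | Set.Infinite {n | pos head T γ x n = v}} with hS
  -- S is nonempty
  have hSne : ∃ v, v ∈ S := by
    by_contra hc
    push_neg at hc
    have hfin : ∀ v : V, Set.Finite {n | pos head T γ x n = v} := by
      intro v
      by_contra hf
      exact hc v hf
    have huniv : (Set.univ : Set ℕ) = ⋃ v : V, {n | pos head T γ x n = v} := by
      ext n; simp
    have : (Set.univ : Set ℕ).Finite := by
      rw [huniv]; exact Set.finite_iUnion hfin
    exact Set.infinite_univ this
  -- S avoids T
  have hST : ∀ v ∈ S, v ∉ T := by
    intro v hv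
    obtain ⟨n, hn⟩ := hv.nonempty
    rw [← hn]
    exact hg n
  -- counts at an infinitely-visited vertex are unbounded
  have hub : ∀ (y : Vo T), (↑y : V) ∈ S → ∀ k, ∃ n, k < cnt head T γ x n y := by
    intro y hy k
    induction k with
    | zero =>
        obtain ⟨n, hn⟩ := hy.nonempty
        have hn' : pos head T γ x n = ↑y := hn
        refine ⟨n + 1, ?_⟩
        rw [cnt_succ, if_pos hn']
        omega
    | succ k ih =>
        obtain ⟨n, hn⟩ := ih
        obtain ⟨m, hm, hnm⟩ := hy.exists_gt n
        have hm' : pos head T γ x m = ↑y := hm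
        refine ⟨m + 1, ?_⟩
        have h1 : cnt head T γ x n y ≤ cnt head T γ x m y :=
          cnt_mono head T γ x (by omega) y
        rw [cnt_succ, if_pos hm']
        omega
  -- the k-th visit exists
  have hvisit : ∀ (y : Vo T), (↑y : V) ∈ S → ∀ k, ∃ m,
      pos head T γ x m = ↑y ∧ cnt head T γ x m y = k := by
    intro y hy k
    obtain ⟨n, hn⟩ := hub y hy k
    obtain ⟨m, _, h1, h2⟩ := cnt_ivt head T γ x n hn
    exact ⟨m, h1, h2⟩
  -- S is closed under out-arcs
  have hclosed : ∀ v ∈ S, ∀ e : E, src e = v → head e ∈ S := by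
    intro v hv e he
    have hvT : v ∉ T := hST v hv
    set y : Vo T := ⟨v, hvT⟩ with hy
    have hyS : (↑y : V) ∈ S := hv
    have hgood := hγ y
    have hd : 1 ≤ outdeg src v := hgood.d_pos src
    obtain ⟨i₀, hi1, hi2, hie⟩ := hgood.2.2 e he
    -- for each j, find the visit with count (i₀ - 1 + j*d).toNat
    have harc : ∀ j : ℕ, ∃ m, pos head T γ x (m+1) = head e ∧
        cnt head T γ x m y = (i₀ - 1 + j * (outdeg src v : ℤ)).toNat := by
      intro j
      set k : ℕ := (i₀ - 1 + j * (outdeg src v : ℤ)).toNat with hk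
      have hkz : (k : ℤ) = i₀ - 1 + j * (outdeg src v : ℤ) := by
        rw [hk]
        apply Int.toNat_of_nonneg
        have hjd : (0:ℤ) ≤ (j : ℤ) * (outdeg src v : ℤ) := by positivity
        omega
      obtain ⟨m, hm1, hm2⟩ := hvisit y hyS k
      refine ⟨m, ?_, hm2⟩
      have hps := pos_succ head T γ x m (fun l _ => hg l) (hg m)
      have hyeq : (⟨pos head T γ x m, hg m⟩ : Vo T) = y := Subtype.ext hm1
      rw [hps, hyeq, hm2]
      have hidx : (k : ℤ) + 1 = i₀ + j * (outdeg src v : ℤ) := by omega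
      rw [hidx]
      have hper : γ y (i₀ + (j : ℤ) * (outdeg src v : ℤ)) = γ y i₀ := by
        have := hgood.per_int src (j : ℤ) i₀
        exact this
      rw [hper, hie]
    -- choose the witnesses
    choose m hm1 hm2 using harc
    have hinj : Function.Injective (fun j => m j + 1) := by
      intro j1 j2 hj
      simp only [Nat.add_right_cancel_iff] at hj
      have h1 := hm2 j1
      have h2 := hm2 j2
      rw [hj] at h1
      rw [h1] at h2
      have hd1 : (1:ℤ) ≤ (outdeg src v : ℤ) := by exact_mod_cast hd
      have : (i₀ - 1 + j1 * (outdeg src v : ℤ)).toNat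
          = (i₀ - 1 + j2 * (outdeg src v : ℤ)).toNat := h2
      have ha : (0:ℤ) ≤ i₀ - 1 + j1 * (outdeg src v : ℤ) := by
        have : (0:ℤ) ≤ (j1 : ℤ) * (outdeg src v : ℤ) := by positivity
        omega
      have hb : (0:ℤ) ≤ i₀ - 1 + j2 * (outdeg src v : ℤ) := by
        have : (0:ℤ) ≤ (j2 : ℤ) * (outdeg src v : ℤ) := by positivity
        omega
      have := congrArg (fun t : ℕ => (t : ℤ)) this
      simp only [Int.toNat_of_nonneg ha, Int.toNat_of_nonneg hb] at this
      have : (j1 : ℤ) * (outdeg src v : ℤ) = j2 * (outdeg src v : ℤ) := by omega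
      have := mul_right_cancel₀ (by omega : (outdeg src v : ℤ) ≠ 0) this
      exact_mod_cast this
    exact Set.infinite_of_injective_forall_mem hinj
      (fun j => by exact hm1 j)
  -- propagate S along reachability to a target
  obtain ⟨y0, hy0⟩ := hSne
  obtain ⟨t, ht⟩ := hT
  have hreach := hconn y0 t
  have hprop : ∀ a b : V,
      Relation.ReflTransGen (fun a b => ∃ e : E, src e = a ∧ head e = b) a b →
      a ∈ S → b ∈ S := by
    intro a b hab
    induction hab with
    | refl => exact fun h => h
    | tail _ hbc ih =>
        intro ha
        obtain ⟨e, he1, he2⟩ := hbc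
        rw [← he2]
        exact hclosed _ (ih ha) e he1
  have htS : t ∈ S := hprop y0 t hreach hy0
  exact hST t htS ht

end Termination

section MainArg

lemma G1 (γ γ' : SConf E T) (w : Vo T → ℤ) (hγ' : γ' = Shift T w γ)
    (hC : ∀ v, Circ head T γ w v = w v) (σ : Vo T → ℕ)
    (hσw : ∀ v, (w v).natAbs ≤ σ v)
    (u u' : Vo T → ℕ)
    (hu2 : ∀ v, u v = σ v + Win head T γ (fun _ => 0) (fun y => (u y : ℤ)) v)
    (hu3' : ∀ h : Vo T → ℕ,
      (∀ v, σ v + Win head T γ' (fun _ => 0) (fun y => (h y : ℤ)) v ≤ h v) →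
      ∀ v, u' v ≤ h v) :
    ∀ v, (u' v : ℤ) ≤ (u v : ℤ) - w v := by
  have hwu : ∀ v, (w v).natAbs ≤ u v := by
    intro v
    have := hu2 v
    have := hσw v
    omega
  set h : Vo T → ℕ := fun v => ((u v : ℤ) - w v).toNat with hh
  have hcast : ∀ v, (h v : ℤ) = (u v : ℤ) - w v := by
    intro v
    have h0 : h v = ((u v : ℤ) - w v).toNat := rfl
    rw [h0]
    have := hwu v
    omega
  have hles : ∀ v, u' v ≤ h v := by
    apply hu3'
    intro v
    have e1 : Win head T γ' (fun _ => 0) (fun y => (h y : ℤ)) v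
        = Win head T γ w (fun y => (u y : ℤ)) v := by
      rw [hγ', Win_shift]
      have hf1 : (fun y : Vo T => (0:ℤ) + w y) = w := by funext y; ring
      have hf2 : (fun y : Vo T => (h y : ℤ) + w y) = (fun y => (u y : ℤ)) := by
        funext y; have := hcast y; omega
      rw [hf1, hf2]
    have e2 := win_sub head T γ w (fun y => (u y : ℤ))
      (fun y => by show (0:ℤ) ≤ (u y : ℤ); positivity)
      (fun y => by show w y ≤ (u y : ℤ); have := hwu y; omega) v
    rw [hC v] at e2
    have e3 := hu2 v
    have e4 := hcast v
    omega
  intro v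
  have := hles v
  have := hcast v
  omega

end MainArg

end FlipAux

/-- **Lemma (flipping preserves equivalence).**
If the stack configurations `β ≡ β'` are equivalent (each stack being a bi-infinite
rotor stack), then their flips are equivalent (with respect to the flipped stacks,
which realize the reversed rotor mechanisms): `Φ(β) ≡ Φ(β')`. -/
theorem flip_sequiv {V E : Type} [Fintype V] [DecidableEq V] [Fintype E]
    (src head : E → V) (hconn : StronglyConnected src head)
    (T : Finset V) (hT : T.Nonempty)
    (β β' : SConf E T)
    (hβ : ∀ v : {v : V // v ∉ T}, IsBiRotorStack src (outdeg src v.1) v.1 (β v))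
    (hβ' : ∀ v : {v : V // v ∉ T}, IsBiRotorStack src (outdeg src v.1) v.1 (β' v))
    (h : SEquiv head T β β') :
    SEquiv head T (flipC β) (flipC β') := by
  classical
  open FlipAux in
  obtain ⟨σ, hσ⟩ := h
  have goodβ : FlipAux.GoodConf src T β :=
    fun v => ⟨(hβ v).1, (hβ v).2.1, (hβ v).2.2.1⟩
  have goodβ' : FlipAux.GoodConf src T β' :=
    fun v => ⟨(hβ' v).1, (hβ' v).2.1, (hβ' v).2.2.1⟩
  have Ob : FlipAux.Oracle head T β :=
    fun a x => FlipAux.terminates src head T hconn hT _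
      (goodβ.shift src T (fun v => ((a v : ℕ) : ℤ))) _
  have Ob' : FlipAux.Oracle head T β' :=
    fun a x => FlipAux.terminates src head T hconn hT _
      (goodβ'.shift src T (fun v => ((a v : ℕ) : ℤ))) _
  obtain ⟨u, hu1, hu2, hu3⟩ := FlipAux.actS_spec head T β Ob σ
  obtain ⟨u', hu1', hu2', hu3'⟩ := FlipAux.actS_spec head T β' Ob' σ
  have hshift : FlipAux.Shift T (fun v => (u v : ℤ)) β
      = FlipAux.Shift T (fun v => (u' v : ℤ)) β' := by
    rw [← hu1, ← hu1', hσ]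
  set w : FlipAux.Vo T → ℤ := fun v => (u v : ℤ) - u' v with hw
  have hwv : ∀ v, w v = (u v : ℤ) - u' v := fun v => rfl
  have hβ'β : β' = FlipAux.Shift T w β := by
    funext v j
    have hj := congrFun (congrFun hshift v) (j - u' v)
    simp only [FlipAux.Shift] at hj ⊢
    have h2 : j - (u' v : ℤ) + u' v = j := by ring
    rw [h2] at hj
    rw [← hj]
    congr 1
    rw [hwv v]
    ring
  -- the circulation identity for (β, w)
  have hC : ∀ v, FlipAux.Circ head T β w v = w v := by
    intro v
    have e2 := hu2' v
    have eW : FlipAux.Win head T β' (fun _ => 0) (fun y => (u' y : ℤ)) v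
        = FlipAux.Win head T β w (fun y => (u y : ℤ)) v := by
      rw [hβ'β, FlipAux.Win_shift]
      have hf1 : (fun y : FlipAux.Vo T => (0:ℤ) + w y) = w := by funext y; ring
      have hf2 : (fun y : FlipAux.Vo T => (u' y : ℤ) + w y)
          = (fun y => (u y : ℤ)) := by
        funext y; rw [hwv y]; ring
      rw [hf1, hf2]
    have hsub := FlipAux.win_sub head T β w (fun y => (u y : ℤ))
      (fun y => by show (0:ℤ) ≤ (u y : ℤ); positivity)
      (fun y => by show w y ≤ (u y : ℤ); rw [hwv y]; omega) v
    have e1 := hu2 v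
    rw [eW] at e2
    rw [hwv v]
    omega
  -- pass to the flips
  set γf : SConf E T := flipC β with hγf
  set γf' : SConf E T := flipC β' with hγf'def
  have hγf' : γf' = FlipAux.Shift T (fun v => - w v) γf := by
    rw [hγf'def, hβ'β, hγf]
    funext v i
    simp only [flipC, FlipAux.Shift]
    congr 1
    ring
  have hCf : ∀ v, FlipAux.Circ head T γf (fun y => - w y) v = - w v := by
    intro v
    rw [hγf, FlipAux.circ_flip, hC v]
  have hCf' : ∀ v, FlipAux.Circ head T γf' w v = w v := by
    intro v
    have := FlipAux.circ_shiftbase head T γf (fun y => - w y) v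
    have hfx : (fun y : FlipAux.Vo T => -(- w y)) = w := by funext y; ring
    rw [hfx] at this
    rw [hγf', this, hCf v]
    ring
  have goodγf : FlipAux.GoodConf src T γf := goodβ.flip src
  have goodγf' : FlipAux.GoodConf src T γf' := goodβ'.flip src
  have Of : FlipAux.Oracle head T γf :=
    fun a x => FlipAux.terminates src head T hconn hT _
      (goodγf.shift src T (fun v => ((a v : ℕ) : ℤ))) _
  have Of' : FlipAux.Oracle head T γf' :=
    fun a x => FlipAux.terminates src head T hconn hT _
      (goodγf'.shift src T (fun v => ((a v : ℕ) : ℤ))) _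
  set τ : FlipAux.Vo T → ℕ := fun v => (w v).natAbs with hτ
  have hτv : ∀ v, τ v = (w v).natAbs := fun v => rfl
  obtain ⟨n, hn1, hn2, hn3⟩ := FlipAux.actS_spec head T γf Of τ
  obtain ⟨n', hn1', hn2', hn3'⟩ := FlipAux.actS_spec head T γf' Of' τ
  -- first application of G1 : n' ≤ n + w
  have happ1 : ∀ v, (n' v : ℤ) ≤ (n v : ℤ) - (- w v) :=
    FlipAux.G1 head T γf γf' (fun v => - w v) hγf' hCf τ
      (fun v => by rw [Int.natAbs_neg, hτv v]) n n' hn2 hn3'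
  -- second application : n ≤ n' - w
  have hγfeq : γf = FlipAux.Shift T w γf' := by
    rw [hγf', FlipAux.Shift_Shift]
    have hfx : (fun v : FlipAux.Vo T => w v + - w v) = (fun _ => (0:ℤ)) := by
      funext y; ring
    rw [hfx, FlipAux.Shift_zero]
  have happ2 : ∀ v, (n v : ℤ) ≤ (n' v : ℤ) - w v :=
    FlipAux.G1 head T γf' γf w hγfeq hCf' τ (fun v => (hτv v).ge) n' n hn2' hn3
  have hkey : ∀ v, (n' v : ℤ) = (n v : ℤ) + w v := by
    intro v
    have := happ1 v
    have := happ2 v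
    omega
  refine ⟨τ, ?_⟩
  rw [hn1, hn1', hγf']
  rw [FlipAux.Shift_Shift]
  funext v i
  simp only [FlipAux.Shift]
  congr 1
  have := hkey v
  omega
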